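/- Let $K$ be a field, $n \geq 3$, $I_1, \dots, I_n, V_1, \dots, V_n \in K$, and let $\mathcal{L} = L(z) - x E_n$ over $K(z)[x]$ be the characteristic matrix of the periodic Jacobi matrix. Let $u(x) = (-1)^{n-1} \det(\mathcal{L}_1)$ and $v(x) = (-1)^{n-1} I_n V_n \det({}^1\mathcal{L}_1)$, where $\mathcal{L}_1$ deletes the last row and column, and ${}^1\mathcal{L}_1$ deletes the first and last rows and columns. Then $(-1)^n I_1 I_2 \cdots I_n - v(0) = -I_n \cdot u(0)$. -/

import Mathlib

open Polynomial

section Aux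
variable {R : Type*} [CommRing R]

def triM (m : ℕ) (d a b : ℕ → R) : Matrix (Fin m) (Fin m) R :=
  Matrix.of fun i j =>
    if (i : ℕ) = j then d i
    else if (i : ℕ) + 1 = j then a i
    else if (j : ℕ) + 1 = i then b j
    else 0

lemma triM_sub_succ (m : ℕ) (d a b : ℕ → R) :
    (triM (m + 1) d a b).submatrix Fin.succ Fin.succ =
      triM m (fun i => d (i + 1)) (fun i => a (i + 1)) (fun i => b (i + 1)) := by
  ext i j
  simp only [triM, Matrix.submatrix_apply, Matrix.of_apply, Fin.val_succ]
  split_ifs <;> first | rfl | omega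

lemma triM_det_rec (m : ℕ) (d a b : ℕ → R) :
    (triM (m + 2) d a b).det =
      d 0 * (triM (m + 1) (fun i => d (i + 1)) (fun i => a (i + 1)) (fun i => b (i + 1))).det
      - a 0 * (b 0 *
        (triM m (fun i => d (i + 2)) (fun i => a (i + 2)) (fun i => b (i + 2))).det) := by
  rw [show (m + 2) = (m + 1) + 1 from rfl, Matrix.det_succ_column_zero,
    Fin.sum_univ_succ, Fin.sum_univ_succ]
  have h0 : ∀ i : Fin m, (triM (m + 2) d a b) i.succ.succ 0 = 0 := by
    intro i
    simp only [triM, Matrix.of_apply, Fin.val_succ, Fin.val_zero]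
    split_ifs <;> simp_all
  rw [Finset.sum_eq_zero (fun i _ => by rw [h0 i]; ring)]
  have e00 : (triM (m + 2) d a b) 0 0 = d 0 := by
    simp [triM]
  have e10 : (triM (m + 2) d a b) 1 0 = b 0 := by
    simp [triM]
  have hsA : (0 : Fin (m+2)).succAbove = Fin.succ := by
    funext j; exact Fin.zero_succAbove j
  have minor1 : ((triM (m + 2) d a b).submatrix ((0 : Fin (m+2)).succAbove) Fin.succ) =
      triM (m + 1) (fun i => d (i + 1)) (fun i => a (i + 1)) (fun i => b (i + 1)) := by
    rw [hsA]; exact triM_sub_succ (m+1) d a b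
  have hval : ∀ i : Fin (m + 1), (((1 : Fin (m+2)).succAbove i : Fin (m+2)) : ℕ) =
      if (i : ℕ) = 0 then 0 else (i : ℕ) + 1 := by
    intro i
    unfold Fin.succAbove
    split_ifs with h1 <;>
      simp_all only [Fin.lt_def, Fin.coe_castSucc, Fin.val_one, Fin.val_succ] <;> omega
  have h10 : (((1 : Fin (m+2)).succAbove 0 : Fin (m+2)) : ℕ) = 0 := by simpa using hval 0
  have minor2 : ((triM (m + 2) d a b).submatrix ((1 : Fin (m+2)).succAbove) Fin.succ).det
      = a 0 * (triM m (fun i => d (i + 2)) (fun i => a (i + 2)) (fun i => b (i + 2))).det := by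
    rw [Matrix.det_succ_row_zero, Fin.sum_univ_succ]
    have hrow : ∀ j : Fin m,
        ((triM (m + 2) d a b).submatrix ((1 : Fin (m+2)).succAbove) Fin.succ) 0 j.succ = 0 := by
      intro j
      simp only [triM, Matrix.submatrix_apply, Matrix.of_apply, h10, Fin.val_succ]
      split_ifs <;> simp_all
    rw [Finset.sum_eq_zero (fun j _ => by rw [hrow j]; ring)]
    have hN00 : ((triM (m + 2) d a b).submatrix ((1 : Fin (m+2)).succAbove) Fin.succ) 0 0 = a 0 := by
      simp only [triM, Matrix.submatrix_apply, Matrix.of_apply, h10, Fin.succ_zero_eq_one,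
        Fin.val_one]
      norm_num
    have hsA' : ((0 : Fin (m+1)).succAbove) = Fin.succ := by
      funext j; exact Fin.zero_succAbove j
    have minor2' : (((triM (m + 2) d a b).submatrix ((1 : Fin (m+2)).succAbove) Fin.succ).submatrix
          Fin.succ ((0 : Fin (m+1)).succAbove)) =
        triM m (fun i => d (i + 2)) (fun i => a (i + 2)) (fun i => b (i + 2)) := by
      rw [hsA']
      ext i j
      have hv : (((1 : Fin (m+2)).succAbove i.succ : Fin (m+2)) : ℕ) = (i : ℕ) + 2 := by
        rw [hval i.succ]; simp
      simp only [triM, Matrix.submatrix_apply, Matrix.of_apply, hv, Fin.val_succ]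
      split_ifs <;> first | rfl | omega
    rw [minor2', hN00]
    simp
  simp only [Fin.succ_zero_eq_one, Fin.val_zero, Fin.val_one, pow_zero, pow_one, add_zero]
  rw [e00, e10, minor1, minor2]
  ring

lemma triM_congr {m : ℕ} {d d' a a' b b' : ℕ → R} (hd : ∀ i, d i = d' i)
    (ha : ∀ i, a i = a' i) (hb : ∀ i, b i = b' i) : triM m d a b = triM m d' a' b' := by
  ext i j
  simp only [triM, Matrix.of_apply, hd, ha, hb]

lemma triM_key (Iq W : ℕ → R) : ∀ m k : ℕ,
    (triM (m + 1) (fun i => Iq (k + i + 1) + W (k + i)) (fun _ => 1)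
        (fun i => Iq (k + i + 1) * W (k + i + 1))).det =
      W k * (triM m (fun i => Iq (k + i + 2) + W (k + i + 1)) (fun _ => 1)
        (fun i => Iq (k + i + 2) * W (k + i + 2))).det
      + ∏ i ∈ Finset.range (m + 1), Iq (k + 1 + i) := by
  intro m
  induction m with
  | zero =>
    intro k
    simp [triM, Matrix.det_fin_one, Matrix.det_fin_zero]
    ring
  | succ m ih =>
    intro k
    rw [triM_det_rec]
    have E1 : (triM (m+1) (fun i => Iq (k + (i+1) + 1) + W (k + (i+1))) (fun _ => (1:R))
          (fun i => Iq (k + (i+1) + 1) * W (k + (i+1) + 1))) =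
        triM (m+1) (fun i => Iq (k + 1 + i + 1) + W (k + 1 + i)) (fun _ => 1)
          (fun i => Iq (k + 1 + i + 1) * W (k + 1 + i + 1)) :=
      triM_congr
        (fun i => by rw [show k+(i+1)+1 = k+1+i+1 by omega, show k+(i+1) = k+1+i by omega])
        (fun i => rfl)
        (fun i => by rw [show k+(i+1)+1 = k+1+i+1 by omega])
    have E2 : (triM m (fun i => Iq (k + (i+2) + 1) + W (k + (i+2))) (fun _ => (1:R))
          (fun i => Iq (k + (i+2) + 1) * W (k + (i+2) + 1))) =
        triM m (fun i => Iq (k + 1 + i + 2) + W (k + 1 + i + 1)) (fun _ => 1)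
          (fun i => Iq (k + 1 + i + 2) * W (k + 1 + i + 2)) :=
      triM_congr
        (fun i => by rw [show k+(i+2)+1 = k+1+i+2 by omega, show k+(i+2) = k+1+i+1 by omega])
        (fun i => rfl)
        (fun i => by rw [show k+(i+2)+1 = k+1+i+2 by omega])
    have E3 : (triM (m+1) (fun i => Iq (k + i + 2) + W (k + i + 1)) (fun _ => (1:R))
          (fun i => Iq (k + i + 2) * W (k + i + 2))) =
        triM (m+1) (fun i => Iq (k + 1 + i + 1) + W (k + 1 + i)) (fun _ => 1)
          (fun i => Iq (k + 1 + i + 1) * W (k + 1 + i + 1)) :=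
      triM_congr
        (fun i => by rw [show k+i+2 = k+1+i+1 by omega, show k+i+1 = k+1+i by omega])
        (fun i => rfl)
        (fun i => by rw [show k+i+2 = k+1+i+1 by omega])
    rw [E1, E2, E3, ih (k+1)]
    have hp : ∏ i ∈ Finset.range (m + 1 + 1), Iq (k + 1 + i) =
        (∏ i ∈ Finset.range (m + 1), Iq (k + 1 + 1 + i)) * Iq (k + 1) := by
      rw [Finset.prod_range_succ']
      congr 1
      exact Finset.prod_congr rfl (fun i _ => by rw [show k+1+(i+1) = k+1+1+i by omega])
    rw [hp]
    simp only [Nat.add_zero]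
    ring

end Aux

/-- The `n × n` periodic Jacobi matrix over `K(z)` (here `z = RatFunc.X`), with diagonal
`(I₁+Vₙ, I₂+V₁, …, Iₙ+Vₙ₋₁)`, superdiagonal all `1`, subdiagonal `(I₁V₁, …, Iₙ₋₁Vₙ₋₁)`,
entry `IₙVₙ/z` at position `(1, n)` and entry `z` at position `(n, 1)`. -/
noncomputable def pJac (K : Type*) [Field K] (n : ℕ) (I V : ℕ → K) :
    Matrix (Fin n) (Fin n) (RatFunc K) :=
  Matrix.of fun i j =>
    if (i : ℕ) = j then RatFunc.C (I ((i : ℕ) + 1) + V (if (i : ℕ) = 0 then n else (i : ℕ)))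
    else if (i : ℕ) + 1 = j then 1
    else if (j : ℕ) + 1 = i then RatFunc.C (I ((j : ℕ) + 1) * V ((j : ℕ) + 1))
    else if (i : ℕ) = 0 ∧ (j : ℕ) = n - 1 then RatFunc.C (I n * V n) / RatFunc.X
    else if (i : ℕ) = n - 1 ∧ (j : ℕ) = 0 then RatFunc.X
    else 0

/-- The characteristic matrix `𝓛 = L(z) − x Eₙ` over `K(z)[x]`. -/
noncomputable def charMat (K : Type*) [Field K] (n : ℕ) (I V : ℕ → K) :
    Matrix (Fin n) (Fin n) (Polynomial (RatFunc K)) :=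
  (pJac K n I V).map (C : RatFunc K →+* Polynomial (RatFunc K)) -
    (X : Polynomial (RatFunc K)) • 1

/-- `u(x) = (−1)^{n−1} det 𝓛₁` (delete last row and column). -/
noncomputable def uPoly (K : Type*) [Field K] (n : ℕ) (I V : ℕ → K) :
    Polynomial (RatFunc K) :=
  (-1) ^ (n - 1) *
    ((charMat K n I V).submatrix
      (fun k : Fin (n - 1) => (⟨(k : ℕ), by have := k.isLt; omega⟩ : Fin n))
      (fun k : Fin (n - 1) => (⟨(k : ℕ), by have := k.isLt; omega⟩ : Fin n))).det

/-- `v(x) = (−1)^{n−1} Iₙ Vₙ det(¹𝓛₁)` (delete first and last rows and columns). -/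
noncomputable def vPoly (K : Type*) [Field K] (n : ℕ) (I V : ℕ → K) :
    Polynomial (RatFunc K) :=
  (-1) ^ (n - 1) * C (RatFunc.C (I n * V n)) *
    ((charMat K n I V).submatrix
      (fun k : Fin (n - 2) => (⟨(k : ℕ) + 1, by have := k.isLt; omega⟩ : Fin n))
      (fun k : Fin (n - 2) => (⟨(k : ℕ) + 1, by have := k.isLt; omega⟩ : Fin n))).det

/-- Lemma 2.11 of the paper: `(−1)ⁿ I₁ ⋯ Iₙ − v(0) = −Iₙ · u(0)`. -/
theorem stmt_13 {K : Type*} [Field K] (n : ℕ) (hn : 3 ≤ n) (I V : ℕ → K) :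
    RatFunc.C ((-1 : K) ^ n * ∏ i ∈ Finset.Icc 1 n, I i) -
        (vPoly K n I V).eval 0 =
      -RatFunc.C (I n) * (uPoly K n I V).eval 0 := by
  obtain ⟨m, rfl⟩ : ∃ m, n = m + 3 := ⟨n - 3, by omega⟩
  clear hn
  set W : ℕ → K := fun i => if i = 0 then V (m + 3) else V i with hW
  -- evaluation of submatrix determinants at 0
  have hev : ∀ {N : ℕ} (f g : Fin N → Fin (m + 3)),
      (((charMat K (m + 3) I V).submatrix f g).det).eval 0 =
        ((pJac K (m + 3) I V).submatrix f g).det := by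
    intro N f g
    have : (Polynomial.eval 0 (((charMat K (m + 3) I V).submatrix f g).det)) =
        (Polynomial.evalRingHom (0 : RatFunc K)) (((charMat K (m + 3) I V).submatrix f g).det) :=
      rfl
    rw [this, RingHom.map_det]
    congr 1
    ext i j
    simp only [RingHom.mapMatrix_apply, Matrix.map_apply, Matrix.submatrix_apply, charMat,
      Matrix.sub_apply, Matrix.smul_apply, Matrix.one_apply, smul_eq_mul, coe_evalRingHom,
      eval_sub, eval_mul, eval_C, eval_X]
    split_ifs <;> simp
  -- the top-left submatrix
  have htop : (pJac K (m + 3) I V).submatrix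
      (fun k : Fin (m + 3 - 1) => (⟨(k : ℕ), by have := k.isLt; omega⟩ : Fin (m + 3)))
      (fun k : Fin (m + 3 - 1) => (⟨(k : ℕ), by have := k.isLt; omega⟩ : Fin (m + 3))) =
      (triM (m + 2) (fun i => I (i + 1) + W i) (fun _ => 1)
        (fun i => I (i + 1) * W (i + 1))).map (RatFunc.C : K →+* RatFunc K) := by
    ext i j
    have hi := i.isLt
    have hj := j.isLt
    simp only [Matrix.submatrix_apply, pJac, triM, Matrix.map_apply, Matrix.of_apply, hW]
    split_ifs <;> first | rfl | omega | simp_all | (exfalso; omega)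
  -- the middle submatrix
  have hmid : (pJac K (m + 3) I V).submatrix
      (fun k : Fin (m + 3 - 2) => (⟨(k : ℕ) + 1, by have := k.isLt; omega⟩ : Fin (m + 3)))
      (fun k : Fin (m + 3 - 2) => (⟨(k : ℕ) + 1, by have := k.isLt; omega⟩ : Fin (m + 3))) =
      (triM (m + 1) (fun i => I (i + 2) + W (i + 1)) (fun _ => 1)
        (fun i => I (i + 2) * W (i + 2))).map (RatFunc.C : K →+* RatFunc K) := by
    ext i j
    have hi := i.isLt
    have hj := j.isLt
    simp only [Matrix.submatrix_apply, pJac, triM, Matrix.map_apply, Matrix.of_apply, hW]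
    split_ifs <;> first | rfl | omega | simp_all | (exfalso; omega)
  set A : K := (triM (m + 2) (fun i => I (i + 1) + W i) (fun _ => 1)
      (fun i => I (i + 1) * W (i + 1))).det with hA
  set B : K := (triM (m + 1) (fun i => I (i + 2) + W (i + 1)) (fun _ => 1)
      (fun i => I (i + 2) * W (i + 2))).det with hB
  have hdet : ∀ {N : ℕ} (M : Matrix (Fin N) (Fin N) K),
      (M.map (RatFunc.C : K →+* RatFunc K)).det = RatFunc.C M.det :=
    fun M => (RingHom.map_det RatFunc.C M).symm
  have hu : (uPoly K (m + 3) I V).eval 0 = (-1) ^ (m + 2) * RatFunc.C A := by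
    rw [uPoly]
    simp only [eval_mul, eval_pow, eval_neg, eval_one]
    rw [hev, htop, hdet, hA, show m + 3 - 1 = m + 2 from by omega]
  have hv : (vPoly K (m + 3) I V).eval 0 =
      (-1) ^ (m + 2) * RatFunc.C (I (m + 3) * V (m + 3)) * RatFunc.C B := by
    rw [vPoly]
    simp only [eval_mul, eval_pow, eval_neg, eval_one, eval_C]
    rw [hev, hmid, hdet, hB, show m + 3 - 1 = m + 2 from by omega]
  rw [hu, hv]
  -- the key identity over K
  have hkey : A = W 0 * B + ∏ i ∈ Finset.range (m + 2), I (1 + i) := by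
    have h := triM_key I W (m + 1) 0
    have e1 : triM (m + 1 + 1) (fun i => I (0 + i + 1) + W (0 + i)) (fun _ => (1:K))
          (fun i => I (0 + i + 1) * W (0 + i + 1)) =
        triM (m + 2) (fun i => I (i + 1) + W i) (fun _ => 1)
          (fun i => I (i + 1) * W (i + 1)) :=
      triM_congr
        (fun i => by rw [show 0 + i + 1 = i + 1 by omega, show 0 + i = i from by omega])
        (fun i => rfl)
        (fun i => by rw [show 0 + i + 1 = i + 1 by omega])
    have e2 : triM (m + 1) (fun i => I (0 + i + 2) + W (0 + i + 1)) (fun _ => (1:K))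
          (fun i => I (0 + i + 2) * W (0 + i + 2)) =
        triM (m + 1) (fun i => I (i + 2) + W (i + 1)) (fun _ => 1)
          (fun i => I (i + 2) * W (i + 2)) :=
      triM_congr
        (fun i => by rw [show 0 + i + 2 = i + 2 by omega, show 0 + i + 1 = i + 1 by omega])
        (fun i => rfl)
        (fun i => by rw [show 0 + i + 2 = i + 2 by omega])
    rw [e1, e2, ← hA, ← hB] at h
    exact h
  have hIcc : ∀ t : ℕ, ∏ i ∈ Finset.Icc 1 t, I i = ∏ i ∈ Finset.range t, I (1 + i) := by
    intro t
    induction t with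
    | zero => simp
    | succ t ih =>
      rw [Finset.prod_Icc_succ_top (by omega), ih, Finset.prod_range_succ,
        show 1 + t = t + 1 by omega]
  have hprod : ∏ i ∈ Finset.Icc 1 (m + 3), I i =
      (∏ i ∈ Finset.range (m + 2), I (1 + i)) * I (m + 3) := by
    rw [hIcc, Finset.prod_range_succ, show 1 + (m + 2) = m + 3 by omega]
  have hW0 : W 0 = V (m + 3) := by simp [hW]
  have hKid : (-1 : K) ^ (m + 3) * ∏ i ∈ Finset.Icc 1 (m + 3), I i -
      (-1) ^ (m + 2) * (I (m + 3) * V (m + 3)) * B =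
      -(I (m + 3)) * ((-1) ^ (m + 2) * A) := by
    rw [hkey, hprod, hW0, show m + 3 = (m + 2) + 1 from rfl, pow_succ]
    ring
  calc RatFunc.C ((-1 : K) ^ (m + 3) * ∏ i ∈ Finset.Icc 1 (m + 3), I i) -
        (-1) ^ (m + 2) * RatFunc.C (I (m + 3) * V (m + 3)) * RatFunc.C B
      = RatFunc.C ((-1 : K) ^ (m + 3) * ∏ i ∈ Finset.Icc 1 (m + 3), I i -
          (-1) ^ (m + 2) * (I (m + 3) * V (m + 3)) * B) := by
        simp only [map_sub, map_mul, map_pow, map_neg, map_one]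
        try ring
    _ = RatFunc.C (-(I (m + 3)) * ((-1) ^ (m + 2) * A)) := by rw [hKid]
    _ = -RatFunc.C (I (m + 3)) * ((-1) ^ (m + 2) * RatFunc.C A) := by
        simp only [map_sub, map_mul, map_pow, map_neg, map_one]
        try ring
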